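/- Let G₂ = K_{a,b} be the complete bipartite graph with n = a + b vertices, and 0 ≤ α ≤ 1. Then the A_α(G₂)-coronal satisfies Γ_{A_α(K_{a,b})}(η) = (ηn − αn² + 2ab) / (η² − αnη + (2α−1)ab) for all η for which ηI − A_α(K_{a,b}) is invertible and the denominator is nonzero. -/

import Mathlib

open Matrix Polynomial

open scoped Classical in
/-- The real adjacency matrix of a simple graph. -/
noncomputable def adjMat {V : Type*} (G : SimpleGraph V) : Matrix V V ℝ :=
  Matrix.of fun u v => if G.Adj u v then 1 else 0

open scoped Classical in
/-- The diagonal degree matrix of a simple graph. -/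
noncomputable def degMatrix {V : Type*} (G : SimpleGraph V) : Matrix V V ℝ :=
  Matrix.of fun u v => if u = v then ((G.neighborSet u).ncard : ℝ) else 0

/-- `A_α(G) = α D(G) + (1-α) A(G)`. -/
noncomputable def Aalpha {V : Type*} (G : SimpleGraph V) (α : ℝ) : Matrix V V ℝ :=
  α • degMatrix G + (1 - α) • adjMat G

open scoped Classical in
/-- The `M`-coronal `Γ_M(θ) = jᵀ (θ I - M)⁻¹ j`, the sum of the entries of `(θ I - M)⁻¹`. -/
noncomputable def coronal {n : Type*} [Fintype n] (M : Matrix n n ℝ) (θ : ℝ) : ℝ :=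
  ∑ i, ∑ j, (θ • (1 : Matrix n n ℝ) - M)⁻¹ i j

open scoped Classical in
/-- The vertex-edge incidence matrix of a simple graph. -/
noncomputable def incMat {V : Type*} (G : SimpleGraph V) : Matrix V G.edgeSet ℝ :=
  Matrix.of fun u e => if u ∈ (e : Sym2 V) then 1 else 0

/-- The corona `G₁ ∘ G₂`: one copy of `G₁` and one copy of `G₂` for every vertex of `G₁`,
joining vertex `i` of `G₁` to every vertex of the `i`-th copy of `G₂`. -/
def corona {V₁ V₂ : Type*} (G₁ : SimpleGraph V₁) (G₂ : SimpleGraph V₂) :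
    SimpleGraph (V₁ ⊕ V₁ × V₂) where
  Adj x y :=
    match x, y with
    | Sum.inl u, Sum.inl v => G₁.Adj u v
    | Sum.inl u, Sum.inr p => u = p.1
    | Sum.inr p, Sum.inl u => u = p.1
    | Sum.inr p, Sum.inr q => p.1 = q.1 ∧ G₂.Adj p.2 q.2
  symm := by
    constructor
    rintro (u | p) (v | q) h
    · exact G₁.symm.symm _ _ h
    · exact h
    · exact h
    · exact ⟨h.1.symm, G₂.symm.symm _ _ h.2⟩
  loopless := by
    constructor
    rintro (u | p) h
    · exact G₁.loopless.irrefl u h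
    · exact G₂.loopless.irrefl p.2 h.2

/-- The edge corona `G₁ ◊ G₂`: one copy of `G₁` and one copy of `G₂` for every edge of `G₁`,
joining both endpoints of edge `e` of `G₁` to every vertex of the copy of `G₂` indexed by `e`. -/
def edgeCorona {V₁ V₂ : Type*} (G₁ : SimpleGraph V₁) (G₂ : SimpleGraph V₂) :
    SimpleGraph (V₁ ⊕ (G₁.edgeSet × V₂)) where
  Adj x y :=
    match x, y with
    | Sum.inl u, Sum.inl v => G₁.Adj u v
    | Sum.inl u, Sum.inr p => u ∈ (p.1 : Sym2 V₁)
    | Sum.inr p, Sum.inl u => u ∈ (p.1 : Sym2 V₁)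
    | Sum.inr p, Sum.inr q => p.1 = q.1 ∧ G₂.Adj p.2 q.2
  symm := by
    constructor
    rintro (u | p) (v | q) h
    · exact G₁.symm.symm _ _ h
    · exact h
    · exact h
    · exact ⟨h.1.symm, G₂.symm.symm _ _ h.2⟩
  loopless := by
    constructor
    rintro (u | p) h
    · exact G₁.loopless.irrefl u h
    · exact G₂.loopless.irrefl p.2 h.2

/-- The `R`-vertex corona `G₁ ⊙ G₂`: the `R`-graph of `G₁` (a new vertex per edge, joined to the
endpoints of that edge) together with one copy of `G₂` for every vertex of `G₁`, joining vertex
`i` of `G₁` to every vertex of the `i`-th copy of `G₂`. -/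
def RvertexCorona {V₁ V₂ : Type*} (G₁ : SimpleGraph V₁) (G₂ : SimpleGraph V₂) :
    SimpleGraph (V₁ ⊕ (G₁.edgeSet ⊕ V₁ × V₂)) where
  Adj x y :=
    match x, y with
    | Sum.inl u, Sum.inl v => G₁.Adj u v
    | Sum.inl u, Sum.inr (Sum.inl e) => u ∈ (e : Sym2 V₁)
    | Sum.inr (Sum.inl e), Sum.inl u => u ∈ (e : Sym2 V₁)
    | Sum.inl u, Sum.inr (Sum.inr p) => u = p.1
    | Sum.inr (Sum.inr p), Sum.inl u => u = p.1
    | Sum.inr (Sum.inr p), Sum.inr (Sum.inr q) => p.1 = q.1 ∧ G₂.Adj p.2 q.2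
    | _, _ => False
  symm := by
    constructor
    rintro (u | (e | p)) (v | (f | q)) h
    all_goals first
      | exact G₁.symm.symm _ _ h
      | exact h
      | exact ⟨h.1.symm, G₂.symm.symm _ _ h.2⟩
  loopless := by
    constructor
    rintro (u | (e | p)) h
    · exact G₁.loopless.irrefl u h
    · exact h
    · exact G₂.loopless.irrefl p.2 h.2

/-- The `R`-edge corona `G₁ ⊖ G₂`: the `R`-graph of `G₁` (a new vertex per edge, joined to the
endpoints of that edge) together with one copy of `G₂` for every edge of `G₁`, joining the new
vertex of edge `e` to every vertex of the copy of `G₂` indexed by `e`. -/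
def RedgeCorona {V₁ V₂ : Type*} (G₁ : SimpleGraph V₁) (G₂ : SimpleGraph V₂) :
    SimpleGraph (V₁ ⊕ (G₁.edgeSet ⊕ G₁.edgeSet × V₂)) where
  Adj x y :=
    match x, y with
    | Sum.inl u, Sum.inl v => G₁.Adj u v
    | Sum.inl u, Sum.inr (Sum.inl e) => u ∈ (e : Sym2 V₁)
    | Sum.inr (Sum.inl e), Sum.inl u => u ∈ (e : Sym2 V₁)
    | Sum.inr (Sum.inl e), Sum.inr (Sum.inr p) => e = p.1
    | Sum.inr (Sum.inr p), Sum.inr (Sum.inl e) => e = p.1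
    | Sum.inr (Sum.inr p), Sum.inr (Sum.inr q) => p.1 = q.1 ∧ G₂.Adj p.2 q.2
    | _, _ => False
  symm := by
    constructor
    rintro (u | (e | p)) (v | (f | q)) h
    all_goals first
      | exact G₁.symm.symm _ _ h
      | exact h
      | exact h.symm
      | exact ⟨h.1.symm, G₂.symm.symm _ _ h.2⟩
  loopless := by
    constructor
    rintro (u | (e | p)) h
    · exact G₁.loopless.irrefl u h
    · exact h
    · exact G₂.loopless.irrefl p.2 h.2

theorem coronal_Aalpha_completeBipartite (a b : ℕ) (α : ℝ) (h0 : 0 ≤ α) (h1 : α ≤ 1) (η : ℝ)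
    (hinv : det (η • (1 : Matrix (Fin a ⊕ Fin b) (Fin a ⊕ Fin b) ℝ)
        - Aalpha (completeBipartiteGraph (Fin a) (Fin b)) α) ≠ 0)
    (hden : η ^ 2 - α * (a + b) * η + (2 * α - 1) * (a * b) ≠ 0) :
    coronal (Aalpha (completeBipartiteGraph (Fin a) (Fin b)) α) η
      = (η * (a + b) - α * ((a : ℝ) + b) ^ 2 + 2 * a * b)
        / (η ^ 2 - α * (a + b) * η + (2 * α - 1) * (a * b)) := by
  classical
  have hdegA : ∀ i : Fin a,
      (((completeBipartiteGraph (Fin a) (Fin b)).neighborSet (Sum.inl i)).ncard : ℝ) = b := by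
    intro i
    rw [Set.ncard_eq_toFinset_card', ← SimpleGraph.neighborFinset_def]
    rw [SimpleGraph.neighborFinset_eq_filter, Finset.card_filter, Fintype.sum_sum_type]
    simp
  have hdegB : ∀ j : Fin b,
      (((completeBipartiteGraph (Fin a) (Fin b)).neighborSet (Sum.inr j)).ncard : ℝ) = a := by
    intro j
    rw [Set.ncard_eq_toFinset_card', ← SimpleGraph.neighborFinset_def]
    rw [SimpleGraph.neighborFinset_eq_filter, Finset.card_filter, Fintype.sum_sum_type]
    simp
  set Δ := η ^ 2 - α * (a + b) * η + (2 * α - 1) * (a * b) with hΔ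
  set x := ((η - α * a) + (1 - α) * b) / Δ with hx
  set y := ((η - α * b) + (1 - α) * a) / Δ with hy
  set M := η • (1 : Matrix (Fin a ⊕ Fin b) (Fin a ⊕ Fin b) ℝ)
      - Aalpha (completeBipartiteGraph (Fin a) (Fin b)) α with hMdef
  have hMinv : IsUnit M.det := isUnit_iff_ne_zero.mpr hinv
  set v : (Fin a ⊕ Fin b) → ℝ := Sum.elim (fun _ => x) (fun _ => y) with hv
  have hMll : ∀ i j : Fin a, M (Sum.inl i) (Sum.inl j) = if i = j then η - α * b else 0 := by
    intro i j
    by_cases h : i = j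
    · subst h
      simp [hMdef, Aalpha, degMatrix, adjMat, Matrix.one_apply, hdegA i]
    · simp [hMdef, Aalpha, degMatrix, adjMat, Matrix.one_apply, h]
  have hMlr : ∀ (i : Fin a) (j : Fin b), M (Sum.inl i) (Sum.inr j) = -(1 - α) := by
    intro i j
    simp [hMdef, Aalpha, degMatrix, adjMat, Matrix.one_apply]
  have hMrl : ∀ (j : Fin b) (i : Fin a), M (Sum.inr j) (Sum.inl i) = -(1 - α) := by
    intro j i
    simp [hMdef, Aalpha, degMatrix, adjMat, Matrix.one_apply]
  have hMrr : ∀ i j : Fin b, M (Sum.inr i) (Sum.inr j) = if i = j then η - α * a else 0 := by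
    intro i j
    by_cases h : i = j
    · subst h
      simp [hMdef, Aalpha, degMatrix, adjMat, Matrix.one_apply, hdegB i]
    · simp [hMdef, Aalpha, degMatrix, adjMat, Matrix.one_apply, h]
  have key1 : (η - α * b) * x - (1 - α) * b * y = 1 := by
    rw [hx, hy, ← mul_div_assoc, ← mul_div_assoc, div_sub_div_same, div_eq_one_iff_eq hden, hΔ]
    ring
  have key2 : (η - α * a) * y - (1 - α) * a * x = 1 := by
    rw [hx, hy, ← mul_div_assoc, ← mul_div_assoc, div_sub_div_same, div_eq_one_iff_eq hden, hΔ]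
    ring
  have hMv : M *ᵥ v = fun _ => 1 := by
    funext u
    have hmv : (M *ᵥ v) u = ∑ w, M u w * v w := rfl
    cases u with
    | inl i =>
      rw [hmv, Fintype.sum_sum_type]
      have e1 : ∀ j : Fin a, M (Sum.inl i) (Sum.inl j) * v (Sum.inl j)
          = if i = j then (η - α * b) * x else 0 := by
        intro j
        rw [hMll i j, hv]
        by_cases h : i = j <;> simp [h]
      have e2 : ∀ j : Fin b, M (Sum.inl i) (Sum.inr j) * v (Sum.inr j) = -(1 - α) * y := by
        intro j; rw [hMlr i j, hv]; simp
      rw [Finset.sum_congr rfl (fun j _ => e1 j), Finset.sum_congr rfl (fun j _ => e2 j),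
        Finset.sum_ite_eq Finset.univ i fun _ => (η - α * b) * x]
      simp only [Finset.mem_univ, if_true, Finset.sum_const, Finset.card_univ,
        Fintype.card_fin, nsmul_eq_mul]
      calc (η - α * b) * x + (b : ℝ) * (-(1 - α) * y)
          = (η - α * b) * x - (1 - α) * b * y := by ring
        _ = 1 := key1
    | inr i =>
      rw [hmv, Fintype.sum_sum_type]
      have e1 : ∀ j : Fin a, M (Sum.inr i) (Sum.inl j) * v (Sum.inl j) = -(1 - α) * x := by
        intro j; rw [hMrl i j, hv]; simp
      have e2 : ∀ j : Fin b, M (Sum.inr i) (Sum.inr j) * v (Sum.inr j)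
          = if i = j then (η - α * a) * y else 0 := by
        intro j
        rw [hMrr i j, hv]
        by_cases h : i = j <;> simp [h]
      rw [Finset.sum_congr rfl (fun j _ => e1 j), Finset.sum_congr rfl (fun j _ => e2 j),
        Finset.sum_ite_eq Finset.univ i fun _ => (η - α * a) * y]
      simp only [Finset.mem_univ, if_true, Finset.sum_const, Finset.card_univ,
        Fintype.card_fin, nsmul_eq_mul]
      calc (a : ℝ) * (-(1 - α) * x) + (η - α * a) * y
          = (η - α * a) * y - (1 - α) * a * x := by ring
        _ = 1 := key2
  have hvinv : v = M⁻¹ *ᵥ (fun _ => 1) := by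
    have h2 : M⁻¹ *ᵥ (M *ᵥ v) = M⁻¹ *ᵥ (fun _ => 1) := by rw [hMv]
    rwa [Matrix.mulVec_mulVec, Matrix.nonsing_inv_mul M hMinv, Matrix.one_mulVec] at h2
  have hcor : coronal (Aalpha (completeBipartiteGraph (Fin a) (Fin b)) α) η = ∑ i, v i := by
    rw [coronal, hvinv]
    refine Finset.sum_congr rfl fun i _ => ?_
    rw [show (M⁻¹ *ᵥ fun _ => 1) i = ∑ j, M⁻¹ i j * 1 from rfl]
    simp only [mul_one, hMdef]
    congr!
  rw [hcor, Fintype.sum_sum_type]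
  simp only [hv, Sum.elim_inl, Sum.elim_inr, Finset.sum_const, Finset.card_univ,
    Fintype.card_fin, nsmul_eq_mul]
  rw [hx, hy, ← mul_div_assoc, ← mul_div_assoc, ← add_div, div_eq_div_iff hden hden, hΔ]
  ring
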